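/- For every τ > 0, C_DL(τ) ≤ 1 / (1 + 2 ∫₁^∞ τ t / (t^α + τ) dt); consequently lim_{τ → ∞} C_DL(τ) = 0. -/

import Mathlib

open MeasureTheory Real Set Filter

noncomputable def A (rho mu : ℝ) : ℝ :=
  ∫ u in (0:ℝ)..rho, (1 - Real.exp (-2 * mu * Real.sqrt (rho ^ 2 - u ^ 2)))

noncomputable def P_SL (lamL mu rho : ℝ) : ℝ := 1 - Real.exp (-2 * lamL * A rho mu)

noncomputable def P_DL (lamL mu rho : ℝ) : ℝ := Real.exp (-2 * lamL * A rho mu)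

noncomputable def K1 (tau alpha x : ℝ) : ℝ :=
  x ^ 2 + 2 * ∫ r in Set.Ioi x,
    tau * x ^ alpha * r ^ (1 - alpha) / (1 + tau * x ^ alpha * r ^ (-alpha))

noncomputable def K2 (mu rho alpha eta tau x : ℝ) : ℝ :=
  ∫ r in (0:ℝ)..rho,
    (1 - Real.exp (-2 * mu * Real.sqrt (rho ^ 2 - r ^ 2)
      - 2 * mu * ∫ u in Set.Ioi (Real.sqrt (rho ^ 2 - r ^ 2)),
          tau * x ^ alpha * eta * (r ^ 2 + u ^ 2) ^ (-(alpha / 2)) /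
            (1 + tau * x ^ alpha * eta * (r ^ 2 + u ^ 2) ^ (-(alpha / 2)))))

noncomputable def K3 (mu rho alpha eta tau x : ℝ) : ℝ :=
  ∫ r in Set.Ioi rho,
    (1 - Real.exp (-2 * mu * ∫ u in Set.Ioi (0:ℝ),
        tau * x ^ alpha * eta * (r ^ 2 + u ^ 2) ^ (-(alpha / 2)) /
          (1 + tau * x ^ alpha * eta * (r ^ 2 + u ^ 2) ^ (-(alpha / 2)))))

noncomputable def C_DL (lamB lamL mu rho alpha eta tau : ℝ) : ℝ :=
  ∫ x in Set.Ioi (0:ℝ),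
    2 * Real.pi * lamB * x *
      Real.exp (-(Real.pi * lamB * K1 tau alpha x) - 2 * lamL * K2 mu rho alpha eta tau x
        - 2 * lamL * K3 mu rho alpha eta tau x)


noncomputable def Ifun (alpha tau : ℝ) : ℝ := ∫ t in Set.Ioi (1:ℝ), tau * t / (t ^ alpha + tau)

lemma Ifun_nonneg (alpha tau : ℝ) (htau : 0 ≤ tau) : 0 ≤ Ifun alpha tau := by
  apply setIntegral_nonneg measurableSet_Ioi
  intro t ht
  have ht0 : (0:ℝ) ≤ t := by linarith [ht.out]
  have h2 := Real.rpow_nonneg ht0 alpha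
  positivity

lemma frac_nonneg (tau x eta alpha r u : ℝ) (htau : 0 ≤ tau) (hx : 0 ≤ x) (heta : 0 ≤ eta) :
    0 ≤ tau * x ^ alpha * eta * (r ^ 2 + u ^ 2) ^ (-(alpha / 2)) /
      (1 + tau * x ^ alpha * eta * (r ^ 2 + u ^ 2) ^ (-(alpha / 2))) := by
  have h1 := Real.rpow_nonneg (x := x) hx alpha
  have h2 : (0:ℝ) ≤ (r ^ 2 + u ^ 2) ^ (-(alpha / 2)) := Real.rpow_nonneg (by positivity) _
  positivity

lemma K2_nonneg (mu rho alpha eta tau x : ℝ) (hmu : 0 ≤ mu) (hrho : 0 ≤ rho)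
    (htau : 0 ≤ tau) (hx : 0 ≤ x) (heta : 0 ≤ eta) : 0 ≤ K2 mu rho alpha eta tau x := by
  apply intervalIntegral.integral_nonneg hrho
  intro r _
  have hs : (0:ℝ) ≤ Real.sqrt (rho ^ 2 - r ^ 2) := Real.sqrt_nonneg _
  have hI : 0 ≤ ∫ u in Set.Ioi (Real.sqrt (rho ^ 2 - r ^ 2)),
      tau * x ^ alpha * eta * (r ^ 2 + u ^ 2) ^ (-(alpha / 2)) /
        (1 + tau * x ^ alpha * eta * (r ^ 2 + u ^ 2) ^ (-(alpha / 2))) :=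
    setIntegral_nonneg measurableSet_Ioi fun u _ => frac_nonneg tau x eta alpha r u htau hx heta
  have : -2 * mu * Real.sqrt (rho ^ 2 - r ^ 2) - 2 * mu * (∫ u in Set.Ioi (Real.sqrt (rho ^ 2 - r ^ 2)),
      tau * x ^ alpha * eta * (r ^ 2 + u ^ 2) ^ (-(alpha / 2)) /
        (1 + tau * x ^ alpha * eta * (r ^ 2 + u ^ 2) ^ (-(alpha / 2)))) ≤ 0 := by nlinarith
  have := Real.exp_le_one_iff.mpr this
  linarith

lemma K3_nonneg (mu rho alpha eta tau x : ℝ) (hmu : 0 ≤ mu)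
    (htau : 0 ≤ tau) (hx : 0 ≤ x) (heta : 0 ≤ eta) : 0 ≤ K3 mu rho alpha eta tau x := by
  apply setIntegral_nonneg measurableSet_Ioi
  intro r _
  have hI : 0 ≤ ∫ u in Set.Ioi (0:ℝ),
      tau * x ^ alpha * eta * (r ^ 2 + u ^ 2) ^ (-(alpha / 2)) /
        (1 + tau * x ^ alpha * eta * (r ^ 2 + u ^ 2) ^ (-(alpha / 2))) :=
    setIntegral_nonneg measurableSet_Ioi fun u _ => frac_nonneg tau x eta alpha r u htau hx heta
  have : -2 * mu * (∫ u in Set.Ioi (0:ℝ),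
      tau * x ^ alpha * eta * (r ^ 2 + u ^ 2) ^ (-(alpha / 2)) /
        (1 + tau * x ^ alpha * eta * (r ^ 2 + u ^ 2) ^ (-(alpha / 2)))) ≤ 0 := by nlinarith
  have := Real.exp_le_one_iff.mpr this
  linarith
lemma K1_eq (tau alpha x : ℝ) (htau : 0 < tau) (hx : 0 < x) :
    K1 tau alpha x = x ^ 2 * (1 + 2 * Ifun alpha tau) := by
  set f : ℝ → ℝ := fun r => tau * x ^ alpha * r ^ (1 - alpha) / (1 + tau * x ^ alpha * r ^ (-alpha))
    with hf
  have key := integral_comp_mul_left_Ioi f 1 hx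
  rw [mul_one] at key
  have hcong : Set.EqOn (fun t => f (x * t)) (fun t => x * (tau * t / (t ^ alpha + tau)))
      (Set.Ioi (1:ℝ)) := by
    intro t ht
    have ht0 : (0:ℝ) < t := lt_trans one_pos ht
    have hta : (0:ℝ) < t ^ alpha := Real.rpow_pos_of_pos ht0 _
    have hxa : (0:ℝ) < x ^ alpha := Real.rpow_pos_of_pos hx _
    have eA : (x * t) ^ (-alpha) = (x ^ alpha * t ^ alpha)⁻¹ := by
      rw [Real.rpow_neg (by positivity), Real.mul_rpow hx.le ht0.le]
    have eB : (x * t) ^ (1 - alpha) = (x * t) * (x ^ alpha * t ^ alpha)⁻¹ := by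
      rw [show (1:ℝ) - alpha = 1 + (-alpha) by ring, Real.rpow_add (by positivity),
        Real.rpow_one, eA]
    simp only [hf]
    rw [eA, eB]
    have hd1 : (0:ℝ) < t ^ alpha + tau := by positivity
    have hd2 : (0:ℝ) < 1 + tau * x ^ alpha * (x ^ alpha * t ^ alpha)⁻¹ := by positivity
    field_simp
  rw [setIntegral_congr_fun measurableSet_Ioi hcong, integral_const_mul, smul_eq_mul] at key
  have hJ : (∫ r in Set.Ioi x, f r) = x ^ 2 * Ifun alpha tau := by
    have h2 : x * (x * Ifun alpha tau) = x * (x⁻¹ * ∫ r in Set.Ioi x, f r) := by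
      rw [← key, ← Ifun]
    have h3 : x * (x⁻¹ * ∫ r in Set.Ioi x, f r) = ∫ r in Set.Ioi x, f r := by
      field_simp
    rw [h3] at h2
    rw [← h2]; ring
  have : K1 tau alpha x = x ^ 2 + 2 * ∫ r in Set.Ioi x, f r := rfl
  rw [this, hJ]; ring
lemma gauss_int {c : ℝ} (hc : 0 < c) :
    ∫ x in Set.Ioi (0:ℝ), x * Real.exp (-c * x ^ 2) = (2 * c)⁻¹ := by
  have hderiv : ∀ x ∈ Set.Ioi (0:ℝ), HasDerivAt (fun y => -(2 * c)⁻¹ * Real.exp (-c * y ^ 2))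
      (x * Real.exp (-c * x ^ 2)) x := by
    intro x _
    have h1 : HasDerivAt (fun y : ℝ => -c * y ^ 2) (-c * (2 * x ^ 1)) x :=
      (hasDerivAt_pow 2 x).const_mul (-c)
    have h2 := (h1.exp).const_mul (-(2 * c)⁻¹)
    refine h2.congr_deriv ?_
    have h2c : (2 * c) ≠ 0 := by positivity
    linear_combination (x * Real.exp (-c * x ^ 2)) * (mul_inv_cancel₀ h2c)
  have hcont : ContinuousWithinAt (fun y : ℝ => -(2 * c)⁻¹ * Real.exp (-c * y ^ 2))
      (Set.Ici 0) 0 := by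
    apply Continuous.continuousWithinAt
    continuity
  have hint : IntegrableOn (fun x : ℝ => x * Real.exp (-c * x ^ 2)) (Set.Ioi 0) :=
    (integrable_mul_exp_neg_mul_sq hc).integrableOn
  have htend : Tendsto (fun y : ℝ => -(2 * c)⁻¹ * Real.exp (-c * y ^ 2)) atTop (nhds 0) := by
    have h1 : Tendsto (fun y : ℝ => -c * y ^ 2) atTop atBot := by
      apply Tendsto.const_mul_atTop_of_neg (by linarith : -c < 0)
      exact tendsto_pow_atTop two_ne_zero
    have h2 := Real.tendsto_exp_atBot.comp h1
    have := h2.const_mul (-(2 * c)⁻¹)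
    simpa using this
  have := integral_Ioi_of_hasDerivAt_of_tendsto hcont hderiv hint htend
  rw [this]
  simp
lemma CDL_nonneg (lamB lamL mu rho alpha eta tau : ℝ) (hlamB : 0 ≤ lamB) :
    0 ≤ C_DL lamB lamL mu rho alpha eta tau := by
  apply setIntegral_nonneg measurableSet_Ioi
  intro x hx
  have hx0 : (0:ℝ) ≤ x := le_of_lt hx
  have := Real.exp_pos (-(Real.pi * lamB * K1 tau alpha x) - 2 * lamL * K2 mu rho alpha eta tau x
    - 2 * lamL * K3 mu rho alpha eta tau x)
  positivity

lemma CDL_le (lamB lamL mu rho alpha eta tau : ℝ) (hlamB : 0 < lamB) (hlamL : 0 < lamL)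
    (hmu : 0 < mu) (hrho : 0 < rho) (heta : 0 < eta) (htau : 0 < tau) :
    C_DL lamB lamL mu rho alpha eta tau ≤ 1 / (1 + 2 * Ifun alpha tau) := by
  have hI : 0 ≤ Ifun alpha tau := Ifun_nonneg alpha tau htau.le
  set c : ℝ := Real.pi * lamB * (1 + 2 * Ifun alpha tau) with hc
  have hcpos : 0 < c := by
    have := Real.pi_pos
    positivity
  set h : ℝ → ℝ := fun x => 2 * Real.pi * lamB * (x * Real.exp (-c * x ^ 2)) with hh
  have hintH : IntegrableOn h (Set.Ioi 0) :=
    ((integrable_mul_exp_neg_mul_sq hcpos).const_mul (2 * Real.pi * lamB)).integrableOn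
  set g : ℝ → ℝ := fun x => 2 * Real.pi * lamB * x *
      Real.exp (-(Real.pi * lamB * K1 tau alpha x) - 2 * lamL * K2 mu rho alpha eta tau x
        - 2 * lamL * K3 mu rho alpha eta tau x) with hg
  have hle : ∀ x ∈ Set.Ioi (0:ℝ), g x ≤ h x := by
    intro x hx
    have hx0 : (0:ℝ) < x := hx
    have hK2 := K2_nonneg mu rho alpha eta tau x hmu.le hrho.le htau.le hx0.le heta.le
    have hK3 := K3_nonneg mu rho alpha eta tau x hmu.le htau.le hx0.le heta.le
    have hK1 : Real.pi * lamB * K1 tau alpha x = c * x ^ 2 := by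
      rw [K1_eq tau alpha x htau hx0, hc]; ring
    have harg : -(Real.pi * lamB * K1 tau alpha x) - 2 * lamL * K2 mu rho alpha eta tau x
        - 2 * lamL * K3 mu rho alpha eta tau x ≤ -c * x ^ 2 := by
      rw [hK1]; nlinarith
    have hexp := Real.exp_le_exp.mpr harg
    have hmulpos : (0:ℝ) ≤ 2 * Real.pi * lamB * x := by
      have := Real.pi_pos; positivity
    calc g x = 2 * Real.pi * lamB * x * Real.exp (-(Real.pi * lamB * K1 tau alpha x)
          - 2 * lamL * K2 mu rho alpha eta tau x - 2 * lamL * K3 mu rho alpha eta tau x) := rfl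
      _ ≤ 2 * Real.pi * lamB * x * Real.exp (-c * x ^ 2) := by
          exact mul_le_mul_of_nonneg_left hexp hmulpos
      _ = h x := by rw [hh]; ring
  have hHval : ∫ x in Set.Ioi (0:ℝ), h x = 1 / (1 + 2 * Ifun alpha tau) := by
    rw [hh]
    rw [integral_const_mul, gauss_int hcpos, hc]
    have hpi := Real.pi_ne_zero
    have h1 : (1:ℝ) + 2 * Ifun alpha tau ≠ 0 := by positivity
    field_simp
  have hCg : C_DL lamB lamL mu rho alpha eta tau = ∫ x in Set.Ioi (0:ℝ), g x := rfl
  rw [hCg, ← hHval]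
  by_cases hgint : IntegrableOn g (Set.Ioi 0)
  · exact setIntegral_mono_on hgint hintH measurableSet_Ioi hle
  · rw [integral_undef hgint]
    apply setIntegral_nonneg measurableSet_Ioi
    intro x hx
    have hx0 : (0:ℝ) ≤ x := le_of_lt hx
    have := (Real.exp_pos (-c * x ^ 2)).le
    have := Real.pi_pos
    rw [hh]
    positivity
lemma Ifun_integrable (alpha tau : ℝ) (halpha : 2 < alpha) (htau : 0 < tau) :
    IntegrableOn (fun t : ℝ => tau * t / (t ^ alpha + tau)) (Set.Ioi 1) := by
  have hdom : IntegrableOn (fun t : ℝ => tau * t ^ (1 - alpha)) (Set.Ioi 1) :=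
    (integrableOn_Ioi_rpow_of_lt (by linarith) one_pos).const_mul tau
  apply Integrable.mono' hdom
  · apply ContinuousOn.aestronglyMeasurable _ measurableSet_Ioi
    apply ContinuousOn.div
    · exact (continuous_const.mul continuous_id).continuousOn
    · apply ContinuousOn.add _ continuousOn_const
      intro t ht
      exact (Real.continuousAt_rpow_const t alpha (Or.inl (ne_of_gt (lt_trans one_pos ht)))).continuousWithinAt
    · intro t ht
      have ht0 : (0:ℝ) < t := lt_trans one_pos ht
      have : (0:ℝ) < t ^ alpha := Real.rpow_pos_of_pos ht0 _
      positivity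
  · rw [ae_restrict_iff' measurableSet_Ioi]
    apply ae_of_all
    intro t ht
    have ht0 : (0:ℝ) < t := lt_trans one_pos ht
    have hta : (0:ℝ) < t ^ alpha := Real.rpow_pos_of_pos ht0 _
    have hnn : (0:ℝ) ≤ tau * t / (t ^ alpha + tau) := by positivity
    rw [Real.norm_of_nonneg hnn]
    have e5 : t ^ (1 - alpha) = t * (t ^ alpha)⁻¹ := by
      rw [show (1:ℝ) - alpha = 1 + (-alpha) by ring, Real.rpow_add ht0, Real.rpow_one,
        Real.rpow_neg ht0.le]
    rw [e5]
    rw [div_le_iff₀ (by positivity)]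
    have : tau * (t * (t ^ alpha)⁻¹) * (t ^ alpha + tau)
        = tau * t + tau * t * ((t ^ alpha)⁻¹ * tau) := by
      field_simp
    rw [this]
    nlinarith [mul_pos (mul_pos (mul_pos htau ht0) (inv_pos.mpr hta)) htau]

lemma Ifun_lb (alpha tau : ℝ) (halpha : 2 < alpha) (htau : 1 ≤ tau) :
    ((tau ^ (alpha⁻¹ : ℝ)) ^ 2 - 1) / 4 ≤ Ifun alpha tau := by
  have htau0 : (0:ℝ) < tau := lt_of_lt_of_le one_pos htau
  have ha0 : (0:ℝ) < alpha := by linarith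
  set S : ℝ := tau ^ (alpha⁻¹ : ℝ) with hS
  have hS1 : 1 ≤ S := Real.one_le_rpow htau (by positivity)
  have hSa : S ^ alpha = tau := by
    rw [hS, ← Real.rpow_mul htau0.le, inv_mul_cancel₀ (ne_of_gt ha0), Real.rpow_one]
  have hintphi := Ifun_integrable alpha tau halpha htau0
  have hphinn : 0 ≤ᵐ[volume.restrict (Set.Ioi (1:ℝ))] fun t : ℝ => tau * t / (t ^ alpha + tau) := by
    filter_upwards [ae_restrict_mem measurableSet_Ioi] with t ht
    have ht0 : (0:ℝ) < t := lt_trans one_pos ht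
    have hta : (0:ℝ) < t ^ alpha := Real.rpow_pos_of_pos ht0 _
    positivity
  have step1 : (∫ t in Set.Ioc (1:ℝ) S, tau * t / (t ^ alpha + tau)) ≤ Ifun alpha tau :=
    setIntegral_mono_set hintphi hphinn (ae_of_all _ Set.Ioc_subset_Ioi_self)
  have step2 : (∫ t in Set.Ioc (1:ℝ) S, t / 2) ≤ ∫ t in Set.Ioc (1:ℝ) S, tau * t / (t ^ alpha + tau) := by
    apply setIntegral_mono_on
    · exact (continuous_id.div_const 2).integrableOn_Ioc
    · exact hintphi.mono_set Set.Ioc_subset_Ioi_self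
    · exact measurableSet_Ioc
    · intro t ht
      have ht1 : (1:ℝ) < t := ht.1
      have ht0 : (0:ℝ) < t := lt_trans one_pos ht1
      have hta : (0:ℝ) < t ^ alpha := Real.rpow_pos_of_pos ht0 _
      have htle : t ^ alpha ≤ tau := by
        rw [← hSa]
        exact Real.rpow_le_rpow ht0.le ht.2 ha0.le
      have e1 : t / 2 = tau * t / (2 * tau) := by field_simp
      rw [e1]
      apply div_le_div_of_nonneg_left (by positivity) (by positivity)
      linarith
  have step3 : (∫ t in Set.Ioc (1:ℝ) S, t / 2) = (S ^ 2 - 1) / 4 := by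
    rw [← intervalIntegral.integral_of_le hS1]
    rw [intervalIntegral.integral_div, integral_id]
    ring
  calc (S ^ 2 - 1) / 4 = ∫ t in Set.Ioc (1:ℝ) S, t / 2 := step3.symm
    _ ≤ _ := le_trans step2 step1
theorem downlink_coverage_upper_bound_and_vanishes (lamB lamL mu rho alpha eta : ℝ) (hlamB : 0 < lamB) (hlamL : 0 < lamL)
    (hmu : 0 < mu) (hrho : 0 < rho) (halpha : 2 < alpha) (heta : 0 < eta) :
    (∀ tau : ℝ, 0 < tau →
      C_DL lamB lamL mu rho alpha eta tau ≤
        1 / (1 + 2 * ∫ t in Set.Ioi (1:ℝ), tau * t / (t ^ alpha + tau))) ∧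
    Filter.Tendsto (fun tau => C_DL lamB lamL mu rho alpha eta tau) Filter.atTop (nhds 0) := by
  have ha0 : (0:ℝ) < alpha := by linarith
  constructor
  · intro tau htau
    exact CDL_le lamB lamL mu rho alpha eta tau hlamB hlamL hmu hrho heta htau
  · have hg0 : Tendsto (fun tau : ℝ => 2 / ((tau ^ (alpha⁻¹ : ℝ)) ^ 2 + 1)) atTop (nhds 0) := by
      apply Tendsto.div_atTop (tendsto_const_nhds)
      apply tendsto_atTop_add_const_right
      exact (tendsto_pow_atTop two_ne_zero).comp (tendsto_rpow_atTop (inv_pos.mpr ha0))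
    apply tendsto_of_tendsto_of_tendsto_of_le_of_le' tendsto_const_nhds hg0
    · exact Eventually.of_forall fun tau => CDL_nonneg lamB lamL mu rho alpha eta tau hlamB.le
    · filter_upwards [eventually_ge_atTop (1:ℝ)] with tau htau1
      have htau0 : (0:ℝ) < tau := lt_of_lt_of_le one_pos htau1
      have hI : 0 ≤ Ifun alpha tau := Ifun_nonneg alpha tau htau0.le
      have hlb := Ifun_lb alpha tau halpha htau1
      set S : ℝ := tau ^ (alpha⁻¹ : ℝ) with hS
      have hSpos : (0:ℝ) < S := Real.rpow_pos_of_pos htau0 _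
      have h1 : (S ^ 2 + 1) / 2 ≤ 1 + 2 * Ifun alpha tau := by linarith
      have h2 : C_DL lamB lamL mu rho alpha eta tau ≤ 1 / (1 + 2 * Ifun alpha tau) :=
        CDL_le lamB lamL mu rho alpha eta tau hlamB hlamL hmu hrho heta htau0
      have h3 : 1 / (1 + 2 * Ifun alpha tau) ≤ 1 / ((S ^ 2 + 1) / 2) :=
        one_div_le_one_div_of_le (by positivity) h1
      have h4 : 1 / ((S ^ 2 + 1) / 2) = 2 / (S ^ 2 + 1) := by
        rw [one_div]; field_simp
      linarith
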